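/- If a musical interval σ has 𝒩(K^j(σ)) = 2 for some j ∈ ℕ₀, then K^j(σ) = 𝔬; consequently the octave 𝔬 is the unique musical interval of height 0, where the height 𝔥(σ) = min{ℓ ∈ ℕ₀ : K^ℓ(σ) = 𝔬} is well defined for every σ ∈ 𝔖. -/

import Mathlib

/-- The positive rational numbers ℚ₊. -/
abbrev Qpos := {q : ℚ // 0 < q}

/-- Octave equivalence on ℚ₊: `q₁ ∼ q₂` iff `q₁ = 2^n * q₂` for some `n ∈ ℤ`. -/
def octaveRel (q₁ q₂ : Qpos) : Prop := ∃ n : ℤ, (q₁ : ℚ) = 2 ^ n * (q₂ : ℚ)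

/-- The group of musical intervals `𝔖 = ℚ₊/∼`. -/
def MusInt := Quot octaveRel

/-- The musical interval `[q]` represented by a positive rational `q`. -/
def cls (q : ℚ) (h : 0 < q) : MusInt := Quot.mk octaveRel ⟨q, h⟩

/-- The octave `𝔬 = [1/2]`. -/
def octave : MusInt := cls (1/2) (by norm_num)

/-- `repSpec σ (m, n)` says that `(m, n)` is a reduced representative of `σ`,
i.e. `σ = [m/n]`, `1/2 ≤ m/n < 1` and `gcd(n, m) = 1`. -/
def repSpec (σ : MusInt) (p : ℕ × ℕ) : Prop :=
  ∃ h : (0 : ℚ) < (p.1 : ℚ) / (p.2 : ℚ),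
    σ = cls ((p.1 : ℚ) / (p.2 : ℚ)) h ∧
    (1 : ℚ) / 2 ≤ (p.1 : ℚ) / (p.2 : ℚ) ∧ (p.1 : ℚ) / (p.2 : ℚ) < 1 ∧
    Nat.gcd p.2 p.1 = 1

open Classical in
/-- The canonical reduced representative `(m_σ, n_σ)` of a musical interval. -/
noncomputable def rep (σ : MusInt) : ℕ × ℕ :=
  if h : ∃ p, repSpec σ p then h.choose else (1, 2)

/-- The numerator `m_σ`, so that `σ = [m_σ/n_σ]`. -/
noncomputable def mVal (σ : MusInt) : ℕ := (rep σ).1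

/-- The map `𝒩`, sending `σ` to the denominator `n_σ`, so that `σ = [m_σ/n_σ]`. -/
noncomputable def nVal (σ : MusInt) : ℕ := (rep σ).2

/-- The Kepler map `K(σ) = [(n_σ - m_σ)/m_σ]`. -/
noncomputable def kepler (σ : MusInt) : MusInt :=
  if h : (0 : ℚ) < ((nVal σ : ℚ) - (mVal σ : ℚ)) / (mVal σ : ℚ) then
    cls (((nVal σ : ℚ) - (mVal σ : ℚ)) / (mVal σ : ℚ)) h
  else octave

/-- The height `𝔥(σ) = min {ℓ ∈ ℕ₀ : K^ℓ(σ) = 𝔬}`. -/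
noncomputable def height (σ : MusInt) : ℕ := sInf {ℓ : ℕ | kepler^[ℓ] σ = octave}

/-- `n` is an Euclidean Gauss–Wantzel number: `n = 2^k * 3^l * 5^m` with
`l, m ∈ {0, 1}` and `n > 1`. -/
def IsEuclidean (n : ℕ) : Prop :=
  1 < n ∧ ∃ k l m : ℕ, (l = 0 ∨ l = 1) ∧ (m = 0 ∨ m = 1) ∧ n = 2 ^ k * 3 ^ l * 5 ^ m

/-- `p` is a Fermat prime: a prime of the form `2^(2^n) + 1`. -/
def IsFermatPrime (p : ℕ) : Prop := p.Prime ∧ ∃ n : ℕ, p = 2 ^ (2 ^ n) + 1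

/-- `n` is a Gauss–Wantzel number: `n > 1` is a power of `2` times a product of
distinct Fermat primes. -/
def IsGaussWantzel (n : ℕ) : Prop :=
  1 < n ∧ ∃ (k : ℕ) (s : Finset ℕ), (∀ p ∈ s, IsFermatPrime p) ∧ n = 2 ^ k * ∏ p ∈ s, p

/-- `σ` is Euclidean consonant: all members of its second Kepler sequence are
Euclidean Gauss–Wantzel numbers. -/
def EuclideanConsonant (σ : MusInt) : Prop :=
  ∀ j ≤ height σ, IsEuclidean (nVal (kepler^[j] σ))

/-- `σ` is Gaussian consonant: all members of its second Kepler sequence are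
Gauss–Wantzel numbers. -/
def GaussianConsonant (σ : MusInt) : Prop :=
  ∀ j ≤ height σ, IsGaussWantzel (nVal (kepler^[j] σ))

lemma octaveRel_equivalence : Equivalence octaveRel := by
  refine ⟨fun q => ⟨0, by simp⟩, ?_, ?_⟩
  · rintro a b ⟨n, h⟩
    exact ⟨-n, by rw [h, ← mul_assoc, ← zpow_add₀ (by norm_num : (2:ℚ) ≠ 0)]; simp⟩
  · rintro a b c ⟨n, h⟩ ⟨m, h'⟩
    exact ⟨n + m, by rw [h, h', ← mul_assoc, ← zpow_add₀ (by norm_num : (2:ℚ) ≠ 0)]⟩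

lemma cls_eq_cls_iff {q₁ q₂ : ℚ} (h₁ : 0 < q₁) (h₂ : 0 < q₂) :
    cls q₁ h₁ = cls q₂ h₂ ↔ ∃ n : ℤ, q₁ = 2 ^ n * q₂ := by
  unfold cls
  change (Quot.mk octaveRel ⟨q₁, h₁⟩ : Quot octaveRel) = Quot.mk octaveRel ⟨q₂, h₂⟩ ↔ _
  rw [Quot.eq]
  constructor
  · intro h
    exact (octaveRel_equivalence.eqvGen_iff).mp h
  · intro h
    exact Relation.EqvGen.rel _ _ h

lemma exists_repSpec (σ : MusInt) : ∃ p, repSpec σ p := by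
  induction σ using Quot.ind with
  | _ q =>
    obtain ⟨q, hq⟩ := q
    obtain ⟨z, hz1, hz2⟩ := exists_mem_Ico_zpow hq (by norm_num : (1:ℚ) < 2)
    set q' : ℚ := q / 2 ^ (z + 1) with hq'def
    have h2 : (0:ℚ) < 2 ^ (z+1) := zpow_pos (by norm_num) _
    have hq' : 0 < q' := div_pos hq h2
    have hlow : (1:ℚ)/2 ≤ q' := by
      rw [hq'def, le_div_iff₀ h2]
      calc (1:ℚ)/2 * 2^(z+1) = 2^z := by
            rw [zpow_add₀ (by norm_num : (2:ℚ) ≠ 0)]; ring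
        _ ≤ q := hz1
    have hhigh : q' < 1 := by
      rw [hq'def, div_lt_one h2]; simpa using hz2
    have hnum : (0:ℤ) < q'.num := Rat.num_pos.mpr hq'
    have h1 : ((q'.num.toNat : ℚ)) = (q'.num : ℚ) := by
      exact_mod_cast Int.toNat_of_nonneg hnum.le
    have hcast : ((q'.num.toNat : ℚ)) / (q'.den : ℚ) = q' := by
      rw [h1]; exact Rat.num_div_den q'
    refine ⟨(q'.num.toNat, q'.den), ?_⟩
    refine ⟨by rw [hcast]; exact hq', ?_, ?_, ?_, ?_⟩
    · show Quot.mk octaveRel ⟨q, hq⟩ = _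
      show cls q hq = _
      rw [cls_eq_cls_iff hq (by rw [hcast]; exact hq')]
      exact ⟨z+1, by rw [hcast, hq'def]; field_simp⟩
    · rw [hcast]; exact hlow
    · rw [hcast]; exact hhigh
    · show Nat.gcd q'.den q'.num.toNat = 1
      have : q'.num.toNat = q'.num.natAbs := by omega
      rw [this, Nat.gcd_comm]
      exact q'.reduced

lemma repSpec_unique {σ : MusInt} {p p' : ℕ×ℕ} (h : repSpec σ p) (h' : repSpec σ p') :
    p = p' := by
  obtain ⟨hpos, hσ, hle, hlt, hg⟩ := h
  obtain ⟨hpos', hσ', hle', hlt', hg'⟩ := h'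
  obtain ⟨w, hw⟩ := (cls_eq_cls_iff hpos hpos').mp (hσ.symm.trans hσ')
  have hp2 : (p.2:ℚ) ≠ 0 := by
    intro h0; rw [h0, div_zero] at hpos; exact lt_irrefl _ hpos
  have hp2' : (p'.2:ℚ) ≠ 0 := by
    intro h0; rw [h0, div_zero] at hpos'; exact lt_irrefl _ hpos'
  set A := (p.1 : ℚ) / (p.2 : ℚ)
  set B := (p'.1 : ℚ) / (p'.2 : ℚ)
  have htw : (0:ℚ) < 2^w := zpow_pos (by norm_num) _
  have hw0 : w = 0 := by
    by_contra hne
    rcases lt_or_gt_of_ne hne with h1 | h1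
    · have : (2:ℚ)^w ≤ 2^(-1:ℤ) := by
        apply zpow_le_zpow_right₀ one_le_two; omega
      have h12 : (2:ℚ)^w ≤ 1/2 := by norm_num at this ⊢; linarith
      nlinarith [hw, hle, hlt', hpos']
    · have : (2:ℚ)^(1:ℤ) ≤ 2^w := by
        apply zpow_le_zpow_right₀ one_le_two; omega
      have h12 : (2:ℚ) ≤ 2^w := by norm_num at this ⊢; linarith
      nlinarith [hw, hlt, hle', hpos']
  rw [hw0] at hw
  simp only [zpow_zero, one_mul] at hw
  have hcross : (p.1:ℚ) * p'.2 = p'.1 * p.2 := by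
    rw [div_eq_div_iff hp2 hp2'] at hw; exact hw
  have hN : p.1 * p'.2 = p'.1 * p.2 := by exact_mod_cast hcross
  have hd1 : p.2 ∣ p'.2 := by
    have : p.2 ∣ p.1 * p'.2 := ⟨p'.1, by rw [hN]; ring⟩
    exact (Nat.Coprime.dvd_of_dvd_mul_left hg this)
  have hd2 : p'.2 ∣ p.2 := by
    have : p'.2 ∣ p'.1 * p.2 := ⟨p.1, by rw [← hN]; ring⟩
    exact (Nat.Coprime.dvd_of_dvd_mul_left hg' this)
  have h2 : p.2 = p'.2 := Nat.dvd_antisymm hd1 hd2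
  have hp2N : p.2 ≠ 0 := by exact_mod_cast fun h0 => hp2 (by exact_mod_cast h0)
  have h1 : p.1 = p'.1 := by
    rw [h2] at hN
    have : p'.2 ≠ 0 := h2 ▸ hp2N
    exact Nat.eq_of_mul_eq_mul_right (Nat.pos_of_ne_zero this) hN
  exact Prod.ext h1 h2

lemma rep_spec (σ : MusInt) : repSpec σ (rep σ) := by
  rw [rep, dif_pos (exists_repSpec σ)]
  exact (exists_repSpec σ).choose_spec

lemma rep_eq {σ : MusInt} {p : ℕ×ℕ} (h : repSpec σ p) : rep σ = p :=
  repSpec_unique (rep_spec σ) h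


lemma cls_eq_octave {q : ℚ} (h : 0 < q) (hn : ∃ n : ℤ, q = 2 ^ n * (1/2)) :
    cls q h = octave := by
  unfold octave
  exact (cls_eq_cls_iff h (by norm_num)).mpr hn

lemma rep_octave : rep octave = (1, 2) := by
  apply rep_eq
  refine ⟨by norm_num, ?_, by norm_num, by norm_num, by norm_num⟩
  refine (cls_eq_octave _ ⟨0, by norm_num⟩).symm

lemma mVal_octave : mVal octave = 1 := by rw [mVal, rep_octave]
lemma nVal_octave : nVal octave = 2 := by rw [nVal, rep_octave]

lemma nVal_cast_ne_zero (σ : MusInt) : ((nVal σ : ℚ)) ≠ 0 := by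
  obtain ⟨hpos, -, -, -, -⟩ := rep_spec σ
  intro h0
  rw [show ((rep σ).2 : ℚ) = (nVal σ : ℚ) from rfl, h0, div_zero] at hpos
  exact lt_irrefl _ hpos

lemma mVal_pos (σ : MusInt) : 0 < mVal σ := by
  obtain ⟨hpos, -, -, -, -⟩ := rep_spec σ
  by_contra h
  have h0 : (rep σ).1 = 0 := by
    have h' : (rep σ).1 = mVal σ := rfl
    omega
  rw [h0] at hpos
  norm_num at hpos

lemma nVal_pos (σ : MusInt) : 0 < nVal σ := by
  have := nVal_cast_ne_zero σ
  by_contra h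
  exact this (by exact_mod_cast (by omega : nVal σ = 0))

lemma mVal_lt_nVal (σ : MusInt) : mVal σ < nVal σ := by
  obtain ⟨hpos, -, -, hlt, -⟩ := rep_spec σ
  have hn : (0:ℚ) < ((rep σ).2 : ℚ) := by
    have := nVal_pos σ; exact_mod_cast this
  rw [div_lt_one hn] at hlt
  exact_mod_cast hlt

lemma nVal_le_two_mul_mVal (σ : MusInt) : nVal σ ≤ 2 * mVal σ := by
  obtain ⟨hpos, -, hle, -, -⟩ := rep_spec σ
  have hn : (0:ℚ) < ((rep σ).2 : ℚ) := by
    have := nVal_pos σ; exact_mod_cast this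
  rw [div_le_div_iff₀ (by norm_num) hn] at hle
  have : ((nVal σ : ℚ)) ≤ 2 * (mVal σ : ℚ) := by
    show ((rep σ).2 : ℚ) ≤ 2 * ((rep σ).1 : ℚ); linarith
  exact_mod_cast this

lemma nVal_coprime (σ : MusInt) : Nat.gcd (nVal σ) (mVal σ) = 1 := by
  obtain ⟨-, -, -, -, hg⟩ := rep_spec σ
  exact hg

lemma two_le_nVal (σ : MusInt) : 2 ≤ nVal σ := by
  have h1 := mVal_pos σ
  have h2 := mVal_lt_nVal σ
  omega

lemma eq_octave_of_nVal_eq_two {σ : MusInt} (h : nVal σ = 2) : σ = octave := by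
  obtain ⟨hpos, hσ, hle, hlt, hg⟩ := rep_spec σ
  have hm : mVal σ = 1 := by
    have h1 := mVal_pos σ
    have h2 := mVal_lt_nVal σ
    omega
  have hm' : (rep σ).1 = 1 := hm
  have hn' : (rep σ).2 = 2 := h
  rw [hσ]
  exact cls_eq_octave _ ⟨0, by rw [hm', hn']; norm_num⟩

lemma kepler_ratio_pos (σ : MusInt) :
    (0 : ℚ) < ((nVal σ : ℚ) - (mVal σ : ℚ)) / (mVal σ : ℚ) := by
  have h1 := mVal_pos σ
  have h2 := mVal_lt_nVal σ
  have hm : (0:ℚ) < (mVal σ : ℚ) := by exact_mod_cast h1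
  have hlt : (mVal σ : ℚ) < (nVal σ : ℚ) := by exact_mod_cast h2
  apply div_pos (by linarith) hm

lemma kepler_eq (σ : MusInt) :
    kepler σ = cls (((nVal σ : ℚ) - (mVal σ : ℚ)) / (mVal σ : ℚ)) (kepler_ratio_pos σ) := by
  rw [kepler, dif_pos (kepler_ratio_pos σ)]

lemma kepler_octave : kepler octave = octave := by
  rw [kepler_eq]
  exact cls_eq_octave _ ⟨1, by rw [mVal_octave, nVal_octave]; norm_num⟩

set_option maxHeartbeats 1000000 in
lemma nVal_kepler_lt {σ : MusInt} (h : nVal σ ≠ 2) : nVal (kepler σ) < nVal σ := by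
  have hmn := mVal_lt_nVal σ
  have hn2m := nVal_le_two_mul_mVal σ
  have hm0 := mVal_pos σ
  have hn3 : 3 ≤ nVal σ := by have := two_le_nVal σ; omega
  have hm2 : 2 ≤ mVal σ := by omega
  obtain ⟨hpos', hσ', hle', hlt', hg'⟩ := rep_spec (kepler σ)
  have hk := kepler_eq σ
  obtain ⟨w, hw⟩ := (cls_eq_cls_iff hpos' (kepler_ratio_pos σ)).mp (hσ'.symm.trans hk)
  set m := mVal σ
  set n := nVal σ
  set m' := mVal (kepler σ) with hm'def
  set n' := nVal (kepler σ) with hn'def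
  have hrep1 : ((rep (kepler σ)).1 : ℚ) = (m' : ℚ) := rfl
  have hrep2 : ((rep (kepler σ)).2 : ℚ) = (n' : ℚ) := rfl
  rw [hrep1, hrep2] at hw hle' hlt' hpos'
  set a := n - m with hadef
  have hsub : ((n:ℚ) - (m:ℚ)) = ((a : ℕ) : ℚ) := by
    rw [hadef]; push_cast [hmn.le]; ring
  have ha0 : 0 < a := by omega
  have ham : a ≤ m := by omega
  have hacop : Nat.gcd a m = 1 := by
    rw [hadef, Nat.gcd_sub_self_left hmn.le]
    exact nVal_coprime σ
  have hmQ : ((m:ℚ)) ≠ 0 := by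
    have : (0:ℚ) < (m:ℚ) := by exact_mod_cast hm0
    exact ne_of_gt this
  have hn'0 : 0 < n' := nVal_pos (kepler σ)
  have hn'Q : ((n':ℚ)) ≠ 0 := by
    have : (0:ℚ) < (n':ℚ) := by exact_mod_cast hn'0
    exact ne_of_gt this
  rw [hsub] at hw
  rcases le_or_gt 0 w with hw0 | hw0
  · -- w ≥ 0 : n' divides m
    lift w to ℕ using hw0
    rw [zpow_natCast, ← mul_div_assoc, div_eq_div_iff hn'Q hmQ] at hw
    have keyN : m' * m = 2 ^ w * a * n' := by exact_mod_cast hw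
    have hdvd : n' ∣ m' * m := ⟨2 ^ w * a, by rw [keyN]; ring⟩
    have hdm : n' ∣ m := Nat.Coprime.dvd_of_dvd_mul_left hg' hdvd
    exact lt_of_le_of_lt (Nat.le_of_dvd hm0 hdm) hmn
  · -- w < 0 : leads to a = m, contradiction
    exfalso
    have hts : (2:ℚ)^w * 2^(-w) = 1 := by
      rw [← zpow_add₀ (by norm_num : (2:ℚ) ≠ 0)]; simp
    have hs2 : (2:ℚ) ≤ 2^(-w) := by
      calc (2:ℚ) = 2^(1:ℤ) := (zpow_one 2).symm
        _ ≤ 2^(-w) := zpow_le_zpow_right₀ one_le_two (by omega)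
    have ht0 : (0:ℚ) < 2^w := zpow_pos (by norm_num) _
    have hX0 : (0:ℚ) < (a:ℚ) / (m:ℚ) := by
      rw [← hsub]; exact kepler_ratio_pos σ
    have hXeq : (a:ℚ)/(m:ℚ) = 2^(-w) * ((m':ℚ)/(n':ℚ)) := by
      rw [hw, ← mul_assoc, mul_comm ((2:ℚ)^(-w)) ((2:ℚ)^w), hts, one_mul]
    have hX1 : (1:ℚ) ≤ (a:ℚ) / (m:ℚ) := by
      rw [hXeq]
      calc (1:ℚ) = 2 * (1/2) := by norm_num
        _ ≤ 2 * ((m':ℚ)/(n':ℚ)) := by linarith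
        _ ≤ 2^(-w) * ((m':ℚ)/(n':ℚ)) := by
            apply mul_le_mul_of_nonneg_right hs2 (le_of_lt hpos')
    have hmQ0 : (0:ℚ) < (m:ℚ) := by exact_mod_cast hm0
    have hma : (m:ℚ) ≤ (a:ℚ) := by
      rw [le_div_iff₀ hmQ0] at hX1; linarith
    have haem : a = m := by
      have : m ≤ a := by exact_mod_cast hma
      omega
    rw [haem, Nat.gcd_self] at hacop
    omega

lemma exists_iter_octave_aux : ∀ (N : ℕ) (σ : MusInt), nVal σ ≤ N →
    ∃ ℓ, kepler^[ℓ] σ = octave := by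
  intro N
  induction N with
  | zero => intro σ h; exact absurd h (by have := two_le_nVal σ; omega)
  | succ N ih =>
    intro σ h
    by_cases h2 : nVal σ = 2
    · exact ⟨0, eq_octave_of_nVal_eq_two h2⟩
    · obtain ⟨ℓ, hℓ⟩ := ih (kepler σ) (by have := nVal_kepler_lt h2; omega)
      exact ⟨ℓ + 1, by rw [Function.iterate_succ_apply]; exact hℓ⟩

lemma exists_iter_octave (σ : MusInt) : ∃ ℓ, kepler^[ℓ] σ = octave :=
  exists_iter_octave_aux (nVal σ) σ le_rfl


/-- if `𝒩(K^j(σ)) = 2` then `K^j(σ) = 𝔬`; the height is well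
defined (the defining set is nonempty for every `σ`), and the octave is the
unique musical interval of height `0`. -/
theorem octave_unique_height_zero :
    (∀ (σ : MusInt) (j : ℕ), nVal (kepler^[j] σ) = 2 → kepler^[j] σ = octave) ∧
    (∀ σ : MusInt, {ℓ : ℕ | kepler^[ℓ] σ = octave}.Nonempty) ∧
    (∀ σ : MusInt, height σ = 0 ↔ σ = octave) := by
  refine ⟨fun σ j h => eq_octave_of_nVal_eq_two h, fun σ => exists_iter_octave σ, fun σ => ?_⟩
  constructor
  · intro h
    have h' : sInf {ℓ : ℕ | kepler^[ℓ] σ = octave} = 0 := h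
    rcases Nat.sInf_eq_zero.mp h' with h0 | h0
    · simpa using h0
    · exfalso
      obtain ⟨ℓ, hℓ⟩ := exists_iter_octave σ
      have hmem : ℓ ∈ {ℓ : ℕ | kepler^[ℓ] σ = octave} := hℓ
      rw [h0] at hmem
      exact hmem
  · intro h
    subst h
    show sInf {ℓ : ℕ | kepler^[ℓ] octave = octave} = 0
    apply Nat.sInf_eq_zero.mpr
    left
    simp [Set.mem_setOf_eq]
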